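/- (Invertibility of the Schur complement and the quadratic-form bound from the proofs of Theorems 2.1 and 3.1.) Suppose a, b ≥ 0 satisfy ‖B*x‖² ≤ a·Re⟨Ax, x⟩ + b·‖x‖² for all x ∈ H₁. Let λ ∈ ℝ with λ ∉ σ(A) and λ ∉ σ(C), and set δ = a / dist[λ, σ(C)] + |aλ + b| / ( dist[λ, σ(A)] · dist[λ, σ(C)] ). If δ < 1, then the Schur complement S(λ) = A − λI − B(C − λI)⁻¹B* is boundedly invertible, and for every x ∈ H₁, Re⟨S(λ)⁻¹x, x⟩ ≤ (1 − δ)⁻¹ · ‖ |A − λI|^{-1/2} x ‖², where |A − λI|^{-1/2} is obtained by applying the continuous functional calculus of A to the function t ↦ |t − λ|^{-1/2}. -/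

import Mathlib

open ContinuousLinearMap

variable {H₁ H₂ : Type*}
  [NormedAddCommGroup H₁] [InnerProductSpace ℂ H₁] [CompleteSpace H₁]
  [NormedAddCommGroup H₂] [InnerProductSpace ℂ H₂] [CompleteSpace H₂]

/-- The first Schur complement `S(λ) = A - λ I - B (C - λ I)⁻¹ B*` (for `λ ∉ σ(C)`;
`Ring.inverse` is junk otherwise). -/
noncomputable def schurC (A : H₁ →L[ℂ] H₁) (B : H₂ →L[ℂ] H₁) (C : H₂ →L[ℂ] H₂)
    (lam : ℂ) : H₁ →L[ℂ] H₁ :=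
  A - lam • 1 - B ∘L (Ring.inverse (C - lam • 1)) ∘L (ContinuousLinearMap.adjoint B)

lemma algmap_eq {H : Type*} [NormedAddCommGroup H] [InnerProductSpace ℂ H] [CompleteSpace H]
    (lam : ℝ) : algebraMap ℝ (H →L[ℂ] H) lam = (lam : ℂ) • 1 := by
  rw [IsScalarTower.algebraMap_apply ℝ ℂ, Algebra.algebraMap_eq_smul_one]; simp

lemma selfadj_inner {H : Type*} [NormedAddCommGroup H] [InnerProductSpace ℂ H] [CompleteSpace H]
    {R : H →L[ℂ] H} (hR : IsSelfAdjoint R) (u v : H) :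
    (inner ℂ (R u) v : ℂ) = inner ℂ u (R v) := by
  conv_lhs => rw [← hR.adjoint_eq]
  exact adjoint_inner_left R v u

lemma ring_inverse_eq {H : Type*} [NormedAddCommGroup H] [InnerProductSpace ℂ H] [CompleteSpace H]
    (S D : H →L[ℂ] H) (h1 : S * D = 1) (h2 : D * S = 1) : Ring.inverse S = D :=
  Ring.inverse_unit ⟨S, D, h1, h2⟩

set_option maxHeartbeats 2000000 in
/-- Invertibility of the Schur complement and the quadratic-form bound
(from the proofs of Theorems 2.1 and 3.1). -/
theorem schur_invertible_and_form_bound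
    (A : H₁ →L[ℂ] H₁) (hA : IsSelfAdjoint A)
    (C : H₂ →L[ℂ] H₂) (hC : IsSelfAdjoint C) (B : H₂ →L[ℂ] H₁)
    (a b : ℝ) (ha : 0 ≤ a) (hb : 0 ≤ b)
    (hab : ∀ x : H₁, ‖ContinuousLinearMap.adjoint B x‖ ^ 2 ≤
      a * (inner ℂ (A x) x : ℂ).re + b * ‖x‖ ^ 2)
    (lam : ℝ) (hlamA : lam ∉ spectrum ℝ A) (hlamC : lam ∉ spectrum ℝ C)
    (δ : ℝ)
    (hδdef : δ = a / Metric.infDist lam (spectrum ℝ C) +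
      |a * lam + b| / (Metric.infDist lam (spectrum ℝ A) * Metric.infDist lam (spectrum ℝ C)))
    (hδ : δ < 1) :
    IsUnit (schurC A B C (lam : ℂ)) ∧
    ∀ x : H₁, (inner ℂ (Ring.inverse (schurC A B C (lam : ℂ)) x) x : ℂ).re ≤
      (1 - δ)⁻¹ * ‖cfc (fun t : ℝ => (Real.sqrt |t - lam|)⁻¹) A x‖ ^ 2 := by
  have h1δ : 0 < 1 - δ := by linarith
  rcases subsingleton_or_nontrivial H₁ with hH | hH
  · constructor
    · exact isUnit_of_subsingleton _
    · intro x
      have hx0 : x = 0 := Subsingleton.elim x 0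
      subst hx0
      simp only [inner_zero_right, Complex.zero_re]
      positivity
  -- main case
  set dA := Metric.infDist lam (spectrum ℝ A) with hdA_def
  set dC := Metric.infDist lam (spectrum ℝ C) with hdC_def
  have hdA_pos : 0 < dA :=
    ((spectrum.isClosed (𝕜 := ℝ) A).notMem_iff_infDist_pos hA.spectrum_nonempty).mp hlamA
  have hdC_nonneg : 0 ≤ dC := Metric.infDist_nonneg
  have hspecA : ∀ t ∈ spectrum ℝ A, dA ≤ |t - lam| := by
    intro t ht
    have := Metric.infDist_le_dist_of_mem (x := lam) ht
    rwa [Real.dist_eq, abs_sub_comm] at this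
  have hspecA' : ∀ t ∈ spectrum ℝ A, (0:ℝ) < |t - lam| :=
    fun t ht => lt_of_lt_of_le hdA_pos (hspecA t ht)
  have hspecC : ∀ t ∈ spectrum ℝ C, dC ≤ |t - lam| := by
    intro t ht
    have := Metric.infDist_le_dist_of_mem (x := lam) ht
    rwa [Real.dist_eq, abs_sub_comm] at this
  have hspecC' : ∀ t ∈ spectrum ℝ C, t - lam ≠ 0 := by
    intro t ht h0
    exact hlamC (by rwa [sub_eq_zero] at h0 ▸ ht)
  -- continuity facts
  have habs_cont : Continuous fun t : ℝ => |t - lam| := (continuous_id.sub continuous_const).abs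
  have hm_cont : Continuous fun t : ℝ => Real.sqrt |t - lam| := Real.continuous_sqrt.comp habs_cont
  have hr_cont : ContinuousOn (fun t : ℝ => (Real.sqrt |t - lam|)⁻¹) (spectrum ℝ A) :=
    ContinuousOn.inv₀ hm_cont.continuousOn fun t ht =>
      ne_of_gt (Real.sqrt_pos.mpr (hspecA' t ht))
  have hg_cont : ContinuousOn (fun t : ℝ => (t - lam) * |t - lam|⁻¹) (spectrum ℝ A) :=
    ContinuousOn.mul (continuous_id.sub continuous_const).continuousOn
      (ContinuousOn.inv₀ habs_cont.continuousOn fun t ht => ne_of_gt (hspecA' t ht))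
  set R := cfc (fun t : ℝ => (Real.sqrt |t - lam|)⁻¹) A with hR_def
  set M := cfc (fun t : ℝ => Real.sqrt |t - lam|) A with hM_def
  set G := cfc (fun t : ℝ => (t - lam) * |t - lam|⁻¹) A with hG_def
  have hRsa : IsSelfAdjoint R := cfc_predicate _ A
  have hRM : R * M = 1 := by
    rw [hR_def, hM_def, ← cfc_mul _ _ A hr_cont hm_cont.continuousOn,
        cfc_congr (g := fun _ : ℝ => (1:ℝ)) (fun t ht => by
          exact inv_mul_cancel₀ (ne_of_gt (Real.sqrt_pos.mpr (hspecA' t ht)))),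
        cfc_const_one ℝ A]
  have hMR : M * R = 1 := by
    rw [hR_def, hM_def, ← cfc_mul _ _ A hm_cont.continuousOn hr_cont,
        cfc_congr (g := fun _ : ℝ => (1:ℝ)) (fun t ht => by
          exact mul_inv_cancel₀ (ne_of_gt (Real.sqrt_pos.mpr (hspecA' t ht)))),
        cfc_const_one ℝ A]
  have hsub : cfc (fun t : ℝ => t - lam) A = A - (lam:ℂ) • 1 := by
    rw [cfc_sub _ _ A, cfc_id' ℝ A, cfc_const lam A, algmap_eq]
  have hMGM : M * G * M = A - (lam:ℂ) • 1 := by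
    rw [hM_def, hG_def, ← cfc_mul _ _ A hm_cont.continuousOn hg_cont,
        ← cfc_mul (fun x : ℝ => Real.sqrt |x - lam| * ((x - lam) * |x - lam|⁻¹)) _ A (hm_cont.continuousOn.mul hg_cont) hm_cont.continuousOn, ← hsub]
    apply cfc_congr
    intro t ht
    have hx : (0:ℝ) < |t - lam| := hspecA' t ht
    have hs : Real.sqrt |t - lam| * Real.sqrt |t - lam| = |t - lam| :=
      Real.mul_self_sqrt (abs_nonneg _)
    show Real.sqrt |t - lam| * ((t - lam) * |t - lam|⁻¹) * Real.sqrt |t - lam| = t - lam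
    field_simp
    linear_combination (t - lam) * hs
  have hG2 : G * G = 1 := by
    rw [hG_def, ← cfc_mul _ _ A hg_cont hg_cont,
        cfc_congr (g := fun _ : ℝ => (1:ℝ)) (fun t ht => by
          have hx : (0:ℝ) < |t - lam| := hspecA' t ht
          show (t - lam) * |t - lam|⁻¹ * ((t - lam) * |t - lam|⁻¹) = 1
          have h2 : (t - lam) * (t - lam) = |t - lam| * |t - lam| := (abs_mul_abs_self _).symm
          have hx' : |t - lam| ≠ 0 := ne_of_gt hx
          calc (t - lam) * |t - lam|⁻¹ * ((t - lam) * |t - lam|⁻¹)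
              = ((t - lam) * (t - lam)) * (|t - lam| * |t - lam|)⁻¹ := by rw [mul_inv]; ring
            _ = 1 := by rw [h2]; exact mul_inv_cancel₀ (mul_ne_zero hx' hx')),
        cfc_const_one ℝ A]
  have hRAR : R * (A - (lam:ℂ) • 1) * R = G := by
    rw [← hMGM]
    calc R * (M * G * M) * R = (R * M) * G * (M * R) := by noncomm_ring
    _ = G := by rw [hRM, hMR, one_mul, mul_one]
  have hGnorm : ‖G‖ ≤ 1 := by
    rw [hG_def]
    apply norm_cfc_le zero_le_one
    intro t ht
    have hx : (0:ℝ) < |t - lam| := hspecA' t ht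
    rw [Real.norm_eq_abs, abs_mul, abs_inv, abs_abs]
    rw [mul_inv_le_iff₀ hx, one_mul]
  have hRnorm : ‖R‖ ≤ (Real.sqrt dA)⁻¹ := by
    rw [hR_def]
    apply norm_cfc_le (by positivity)
    intro t ht
    rw [Real.norm_eq_abs, abs_inv, abs_of_nonneg (Real.sqrt_nonneg _)]
    exact inv_anti₀ (Real.sqrt_pos.mpr hdA_pos) (Real.sqrt_le_sqrt (hspecA t ht))
  have hRx_sq : ∀ y : H₁, ‖R y‖ ^ 2 ≤ dA⁻¹ * ‖y‖ ^ 2 := by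
    intro y
    have h1 : ‖R y‖ ≤ (Real.sqrt dA)⁻¹ * ‖y‖ :=
      (R.le_opNorm y).trans (by gcongr)
    have h2 : ((Real.sqrt dA)⁻¹ * ‖y‖) ^ 2 = dA⁻¹ * ‖y‖ ^ 2 := by
      rw [mul_pow, inv_pow, Real.sq_sqrt hdA_pos.le]
    calc ‖R y‖ ^ 2 ≤ ((Real.sqrt dA)⁻¹ * ‖y‖) ^ 2 :=
          pow_le_pow_left₀ (norm_nonneg _) h1 2
    _ = dA⁻¹ * ‖y‖ ^ 2 := h2
  -- C side
  have hCunit : IsUnit (C - (lam:ℂ) • 1) := by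
    have h := spectrum.notMem_iff.mp hlamC
    rw [algmap_eq] at h
    have h2 := h.neg
    rwa [neg_sub] at h2
  have hsubC_cont : ContinuousOn (fun t : ℝ => t - lam) (spectrum ℝ C) :=
    (continuous_id.sub continuous_const).continuousOn
  have hCinv_cont : ContinuousOn (fun t : ℝ => (t - lam)⁻¹) (spectrum ℝ C) :=
    ContinuousOn.inv₀ hsubC_cont hspecC'
  have hCsub : cfc (fun t : ℝ => t - lam) C = C - (lam:ℂ) • 1 := by
    rw [cfc_sub _ _ C, cfc_id' ℝ C, cfc_const lam C, algmap_eq]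
  set Ci := Ring.inverse (C - (lam:ℂ) • 1) with hCi_def
  have hCi_eq : Ci = cfc (fun t : ℝ => (t - lam)⁻¹) C := by
    rw [hCi_def]
    apply ring_inverse_eq
    · rw [← hCsub, ← cfc_mul _ _ C hsubC_cont hCinv_cont,
        cfc_congr (g := fun _ : ℝ => (1:ℝ)) (fun t ht => mul_inv_cancel₀ (hspecC' t ht)),
        cfc_const_one ℝ C]
    · rw [← hCsub, ← cfc_mul _ _ C hCinv_cont hsubC_cont,
        cfc_congr (g := fun _ : ℝ => (1:ℝ)) (fun t ht => inv_mul_cancel₀ (hspecC' t ht)),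
        cfc_const_one ℝ C]
  have hCi_norm : ‖Ci‖ ≤ dC⁻¹ := by
    rw [hCi_eq]
    apply norm_cfc_le (inv_nonneg.mpr hdC_nonneg)
    intro t ht
    have hdCpos : 0 < dC :=
      ((spectrum.isClosed (𝕜 := ℝ) C).notMem_iff_infDist_pos ⟨t, ht⟩).mp hlamC
    rw [Real.norm_eq_abs, abs_inv]
    exact inv_anti₀ hdCpos (hspecC t ht)
  -- delta'
  set δ' := a + |a * lam + b| * dA⁻¹ with hδ'_def
  have hδ'0 : 0 ≤ δ' := add_nonneg ha (mul_nonneg (abs_nonneg _) (inv_nonneg.mpr hdA_pos.le))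
  have hδeq : δ = δ' * dC⁻¹ := by
    rw [hδdef, hδ'_def, div_eq_mul_inv, div_eq_mul_inv, mul_inv]; ring
  -- inner decomposition
  have hinner_sub : ∀ x : H₁, ((inner ℂ ((A - (lam:ℂ) • 1) x) x : ℂ)).re =
      (inner ℂ (A x) x : ℂ).re - lam * ‖x‖ ^ 2 := by
    intro x
    have h1 : ((lam:ℂ) • (1 : H₁ →L[ℂ] H₁)) x = (lam:ℂ) • x := by simp
    rw [ContinuousLinearMap.sub_apply, inner_sub_left, Complex.sub_re, h1, inner_smul_left]
    congr 1
    rw [Complex.conj_ofReal, inner_self_eq_norm_sq_to_K]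
    simp [Complex.mul_re]
    left
    rw [← Complex.ofReal_pow, Complex.ofReal_re]
  -- the key quadratic estimate
  have hW : ∀ y : H₁, ‖adjoint B (R y)‖ ^ 2 ≤ δ' * ‖y‖ ^ 2 := by
    intro y
    have hGy : (inner ℂ ((A - (lam:ℂ) • 1) (R y)) (R y) : ℂ) = inner ℂ (G y) y := by
      rw [← selfadj_inner hRsa ((A - (lam:ℂ) • 1) (R y)) y]
      have happ : R ((A - (lam:ℂ) • 1) (R y)) = G y := by
        rw [← hRAR]; simp [mul_apply]
      rw [happ]
    have hre : (inner ℂ (A (R y)) (R y) : ℂ).re =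
        (inner ℂ (G y) y : ℂ).re + lam * ‖R y‖ ^ 2 := by
      have h := hinner_sub (R y)
      rw [hGy] at h; linarith
    have hGyb : (inner ℂ (G y) y : ℂ).re ≤ ‖y‖ ^ 2 := by
      calc (inner ℂ (G y) y : ℂ).re ≤ ‖(inner ℂ (G y) y : ℂ)‖ := Complex.re_le_norm _
      _ = ‖(inner ℂ (G y) y : ℂ)‖ := rfl
      _ ≤ ‖G y‖ * ‖y‖ := norm_inner_le_norm _ _
      _ ≤ (‖G‖ * ‖y‖) * ‖y‖ := by gcongr; exact G.le_opNorm y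
      _ ≤ (1 * ‖y‖) * ‖y‖ := by gcongr
      _ = ‖y‖ ^ 2 := by ring
    calc ‖adjoint B (R y)‖ ^ 2 ≤ a * (inner ℂ (A (R y)) (R y) : ℂ).re + b * ‖R y‖ ^ 2 :=
          hab (R y)
    _ = a * (inner ℂ (G y) y : ℂ).re + (a * lam + b) * ‖R y‖ ^ 2 := by rw [hre]; ring
    _ ≤ a * ‖y‖ ^ 2 + |a * lam + b| * (dA⁻¹ * ‖y‖ ^ 2) := by
        apply add_le_add (mul_le_mul_of_nonneg_left hGyb ha)
        calc (a * lam + b) * ‖R y‖ ^ 2 ≤ |a * lam + b| * ‖R y‖ ^ 2 :=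
              mul_le_mul_of_nonneg_right (le_abs_self _) (sq_nonneg _)
        _ ≤ |a * lam + b| * (dA⁻¹ * ‖y‖ ^ 2) :=
              mul_le_mul_of_nonneg_left (hRx_sq y) (abs_nonneg _)
    _ = δ' * ‖y‖ ^ 2 := by rw [hδ'_def]; ring
  have hWnorm : ‖adjoint B ∘L R‖ ≤ Real.sqrt δ' := by
    apply opNorm_le_bound _ (Real.sqrt_nonneg _)
    intro y
    rw [comp_apply]
    calc ‖adjoint B (R y)‖ = Real.sqrt (‖adjoint B (R y)‖ ^ 2) :=
          (Real.sqrt_sq (norm_nonneg _)).symm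
    _ ≤ Real.sqrt (δ' * ‖y‖ ^ 2) := Real.sqrt_le_sqrt (hW y)
    _ = Real.sqrt δ' * ‖y‖ := by
        rw [Real.sqrt_mul hδ'0, Real.sqrt_sq (norm_nonneg _)]
  -- the operator K
  set K := R * (B ∘L Ci ∘L adjoint B) * R with hK_def
  have hK_comp : K = (R ∘L B) ∘L (Ci ∘L (adjoint B ∘L R)) := by
    ext y; simp [hK_def, mul_apply, comp_apply]
  have hRBnorm : ‖R ∘L B‖ ≤ Real.sqrt δ' := by
    have hadj : R ∘L B = adjoint (adjoint B ∘L R) := by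
      rw [adjoint_comp, adjoint_adjoint, hRsa.adjoint_eq]
    rw [hadj]
    calc ‖adjoint (adjoint B ∘L R)‖ = ‖adjoint B ∘L R‖ := adjoint.norm_map _
    _ ≤ Real.sqrt δ' := hWnorm
  have hKnorm : ‖K‖ ≤ δ := by
    rw [hK_comp, hδeq]
    calc ‖(R ∘L B) ∘L (Ci ∘L (adjoint B ∘L R))‖
        ≤ ‖R ∘L B‖ * ‖Ci ∘L (adjoint B ∘L R)‖ := opNorm_comp_le _ _
    _ ≤ Real.sqrt δ' * (dC⁻¹ * Real.sqrt δ') := by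
        apply mul_le_mul hRBnorm ?_ (norm_nonneg _) (Real.sqrt_nonneg _)
        calc ‖Ci ∘L (adjoint B ∘L R)‖ ≤ ‖Ci‖ * ‖adjoint B ∘L R‖ := opNorm_comp_le _ _
        _ ≤ dC⁻¹ * Real.sqrt δ' :=
              mul_le_mul hCi_norm hWnorm (norm_nonneg _) (inv_nonneg.mpr hdC_nonneg)
    _ = δ' * dC⁻¹ := by
        rw [show Real.sqrt δ' * (dC⁻¹ * Real.sqrt δ') = (Real.sqrt δ' * Real.sqrt δ') * dC⁻¹
          from by ring, Real.mul_self_sqrt hδ'0]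
  -- inverting 1 - G K
  set GK := G * K with hGK_def
  have hGKle : ‖GK‖ ≤ δ := by
    rw [hGK_def]
    calc ‖G * K‖ ≤ ‖G‖ * ‖K‖ := norm_mul_le _ _
    _ ≤ 1 * δ := mul_le_mul hGnorm hKnorm (norm_nonneg _) zero_le_one
    _ = δ := one_mul δ
  have hGKlt : ‖GK‖ < 1 := lt_of_le_of_lt hGKle hδ
  let u : (H₁ →L[ℂ] H₁)ˣ := Units.oneSub GK hGKlt
  have hu_val : (u : H₁ →L[ℂ] H₁) = 1 - GK := rfl
  set Vi := ((u⁻¹ : (H₁ →L[ℂ] H₁)ˣ) : H₁ →L[ℂ] H₁) with hVi_def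
  have hVVi : (1 - GK) * Vi = 1 := by rw [← hu_val]; exact u.mul_inv
  have hViV : Vi * (1 - GK) = 1 := by rw [← hu_val]; exact u.inv_mul
  have hVi_bound : ‖Vi‖ ≤ (1 - δ)⁻¹ := by
    have hexp : Vi = 1 + Vi * GK := by
      have h : Vi - Vi * GK = 1 := by
        have h2 : Vi * 1 - Vi * GK = 1 := by rw [← mul_sub]; exact hViV
        rwa [mul_one] at h2
      exact (sub_eq_iff_eq_add.mp h).trans (by ring)
    have hb1 : ‖Vi‖ ≤ 1 + ‖Vi‖ * δ := by
      calc ‖Vi‖ = ‖1 + Vi * GK‖ := by rw [← hexp]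
      _ ≤ ‖(1 : H₁ →L[ℂ] H₁)‖ + ‖Vi * GK‖ := norm_add_le _ _
      _ ≤ 1 + ‖Vi‖ * δ := by
          apply add_le_add (le_of_eq norm_one)
          exact le_trans (norm_mul_le _ _) (mul_le_mul_of_nonneg_left hGKle (norm_nonneg _))
    have h2 : ‖Vi‖ * (1 - δ) ≤ 1 := by nlinarith
    rw [inv_eq_one_div]
    exact (le_div_iff₀ h1δ).mpr h2
  -- the middle factor T = G - K
  set T := G - K with hT_def
  have hTV : T = G * (1 - GK) := by
    rw [hT_def, hGK_def, mul_sub, mul_one, ← mul_assoc, hG2, one_mul]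
  set Ti := Vi * G with hTi_def
  have hTTi : T * Ti = 1 := by
    rw [hTV, hTi_def]
    calc G * (1 - GK) * (Vi * G) = G * ((1 - GK) * Vi) * G := by noncomm_ring
    _ = 1 := by rw [hVVi, mul_one, hG2]
  have hTiT : Ti * T = 1 := by
    rw [hTV, hTi_def]
    calc (Vi * G) * (G * (1 - GK)) = Vi * (G * G) * (1 - GK) := by noncomm_ring
    _ = 1 := by rw [hG2, mul_one, hViV]
  have hTi_norm : ‖Ti‖ ≤ (1 - δ)⁻¹ := by
    rw [hTi_def]
    calc ‖Vi * G‖ ≤ ‖Vi‖ * ‖G‖ := norm_mul_le _ _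
    _ ≤ (1 - δ)⁻¹ * 1 := mul_le_mul hVi_bound hGnorm (norm_nonneg _) (by positivity)
    _ = (1 - δ)⁻¹ := mul_one _
  -- factorization of the Schur complement
  have hMKM : M * K * M = B ∘L Ci ∘L adjoint B := by
    rw [hK_def]
    calc M * (R * (B ∘L Ci ∘L adjoint B) * R) * M
        = (M * R) * (B ∘L Ci ∘L adjoint B) * (R * M) := by noncomm_ring
    _ = B ∘L Ci ∘L adjoint B := by rw [hMR, hRM, one_mul, mul_one]
  have hS : schurC A B C (lam:ℂ) = M * T * M := by
    rw [hT_def]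
    have hexpand : M * (G - K) * M = M * G * M - M * K * M := by noncomm_ring
    rw [hexpand, hMGM, hMKM]
    simp only [schurC, hCi_def]
  have hSinv1 : (M * T * M) * (R * Ti * R) = 1 := by
    have e1 : (M * T * M) * (R * Ti * R) = M * (T * (M * R) * Ti) * R := by noncomm_ring
    rw [e1, hMR, mul_one, hTTi, mul_one, hMR]
  have hSinv2 : (R * Ti * R) * (M * T * M) = 1 := by
    have e1 : (R * Ti * R) * (M * T * M) = R * (Ti * (R * M) * T) * M := by noncomm_ring
    rw [e1, hRM, mul_one, hTiT, mul_one, hRM]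
  have hSunit : IsUnit (schurC A B C (lam:ℂ)) := by
    rw [hS]; exact ⟨⟨M * T * M, R * Ti * R, hSinv1, hSinv2⟩, rfl⟩
  refine ⟨hSunit, fun x => ?_⟩
  have hSinv : Ring.inverse (schurC A B C (lam:ℂ)) = R * Ti * R := by
    rw [hS]; exact ring_inverse_eq _ _ hSinv1 hSinv2
  rw [hSinv]
  have happly : (R * Ti * R) x = R (Ti (R x)) := by simp [mul_apply]
  rw [happly, selfadj_inner hRsa (Ti (R x)) x]
  calc (inner ℂ (Ti (R x)) (R x) : ℂ).re ≤ ‖(inner ℂ (Ti (R x)) (R x) : ℂ)‖ :=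
        Complex.re_le_norm _
  _ = ‖(inner ℂ (Ti (R x)) (R x) : ℂ)‖ := rfl
  _ ≤ ‖Ti (R x)‖ * ‖R x‖ := norm_inner_le_norm _ _
  _ ≤ (‖Ti‖ * ‖R x‖) * ‖R x‖ := by gcongr; exact Ti.le_opNorm _
  _ ≤ ((1 - δ)⁻¹ * ‖R x‖) * ‖R x‖ := by gcongr
  _ = (1 - δ)⁻¹ * ‖R x‖ ^ 2 := by ring
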